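/- Let n > 1. Then the set of signed knapsack numbers for the composition (1, n−1) is ñ_{(1,n−1)}(CF) = {−n+2} ∪ {j ∈ ℤ : −n+4 ≤ j ≤ n−3} ∪ {0} ∪ {n}. -/

import Mathlib

open scoped Classical

noncomputable section

namespace CardShuffle

/-- The descent set of a permutation of `Fin n`, recorded with 1-based positions:
`i ∈ Des w` iff `1 ≤ i ≤ n-1` and (in 1-based terms) `w(i) > w(i+1)`. -/
def Des {n : ℕ} (w : Equiv.Perm (Fin n)) : Finset ℕ :=
  (Finset.Ico 1 n).filter fun i =>
    ∃ h : i < n, w ⟨i, h⟩ < w ⟨i - 1, Nat.lt_of_le_of_lt (Nat.sub_le i 1) h⟩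

/-- The element `B_I` of the group algebra. -/
def BElt (k : Type*) [CommRing k] (n : ℕ) (I : Finset ℕ) :
    MonoidAlgebra k (Equiv.Perm (Fin n)) :=
  ∑ w ∈ Finset.univ.filter fun w : Equiv.Perm (Fin n) => Des w ⊆ I,
    MonoidAlgebra.of k (Equiv.Perm (Fin n)) w

/-- The element `D_I` of the group algebra. -/
def DElt (k : Type*) [CommRing k] (n : ℕ) (I : Finset ℕ) :
    MonoidAlgebra k (Equiv.Perm (Fin n)) :=
  ∑ w ∈ Finset.univ.filter fun w : Equiv.Perm (Fin n) => Des w = I,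
    MonoidAlgebra.of k (Equiv.Perm (Fin n)) w

/-- The longest element `w₀` (i.e. `i ↦ n+1-i` in 1-based terms) as an element of the
group algebra. -/
def w0elt (k : Type*) [CommRing k] (n : ℕ) : MonoidAlgebra k (Equiv.Perm (Fin n)) :=
  MonoidAlgebra.of k (Equiv.Perm (Fin n)) Fin.revPerm

/-- `gapsInv α = gaps⁻¹(α)`: the set of partial sums `α₁+⋯+α_i` for `1 ≤ i ≤ ℓ(α)-1`,
a subset of `[n-1] = {1,…,n-1}`. -/
def gapsInv {n : ℕ} (α : Composition n) : Finset ℕ :=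
  (Finset.Ico 1 α.length).image α.sizeUpTo

/-- The element `B_α := B_{gaps⁻¹(α)}` for a composition `α` of `n`. -/
def BComp (k : Type*) [CommRing k] {n : ℕ} (α : Composition n) :
    MonoidAlgebra k (Equiv.Perm (Fin n)) :=
  BElt k n (gapsInv α)

/-- The reverse of a composition. -/
def revComp {n : ℕ} (α : Composition n) : Composition n where
  blocks := α.blocks.reverse
  blocks_pos := by intro i h; exact α.blocks_pos (List.mem_reverse.mp h)
  blocks_sum := by rw [List.sum_reverse]; exact α.blocks_sum

/-- A set composition (face) of `[n]`: an ordered tuple of pairwise disjoint nonempty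
subsets of `[n]` whose union is `[n]`. -/
structure SetComp (n : ℕ) where
  blocks : List (Finset (Fin n))
  nonempty : ∀ B ∈ blocks, B.Nonempty
  pairwiseDisjoint : blocks.Pairwise Disjoint
  cover : ∀ x : Fin n, ∃ B ∈ blocks, x ∈ B

namespace SetComp

variable {n : ℕ}

/-- The length (number of blocks) of a set composition. -/
abbrev len (F : SetComp n) : ℕ := F.blocks.length

/-- Containment of faces: `F.le G` (i.e. `F ⊑ G`) iff every block of `F` is a subset
of some block of `G`. -/
def le (F G : SetComp n) : Prop := ∀ B ∈ F.blocks, ∃ C ∈ G.blocks, B ⊆ C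

/-- The type of a set composition, as the list of sizes of its blocks. -/
def typeList (F : SetComp n) : List ℕ := F.blocks.map Finset.card

/-- The product of two set compositions: the list of all nonempty intersections
`F_i ∩ G_j`, in lexicographically increasing order of `(i,j)`. -/
def mul (F G : SetComp n) : SetComp n where
  blocks := ((F.blocks.map fun B => G.blocks.map fun C => B ∩ C).flatten).filter
      fun S => S.Nonempty
  nonempty := by
    intro B hB
    simpa using (List.mem_filter.mp hB).2
  pairwiseDisjoint := by
    apply List.Pairwise.filter
    rw [List.pairwise_flatten]
    constructor
    · intro l hl
      rw [List.mem_map] at hl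
      obtain ⟨B, hB, rfl⟩ := hl
      rw [List.pairwise_map]
      exact G.pairwiseDisjoint.imp fun h =>
        h.mono Finset.inter_subset_right Finset.inter_subset_right
    · rw [List.pairwise_map]
      refine F.pairwiseDisjoint.imp ?_
      intro B B' h x hx y hy
      rw [List.mem_map] at hx hy
      obtain ⟨C, _, rfl⟩ := hx
      obtain ⟨C', _, rfl⟩ := hy
      exact h.mono Finset.inter_subset_left Finset.inter_subset_left
  cover := by
    intro x
    obtain ⟨B, hB, hxB⟩ := F.cover x
    obtain ⟨C, hC, hxC⟩ := G.cover x
    refine ⟨B ∩ C, ?_, Finset.mem_inter.mpr ⟨hxB, hxC⟩⟩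
    rw [List.mem_filter]
    constructor
    · rw [List.mem_flatten]
      exact ⟨_, List.mem_map_of_mem hB, List.mem_map_of_mem hC⟩
    · exact decide_eq_true ⟨x, Finset.mem_inter.mpr ⟨hxB, hxC⟩⟩

/-- The one-block set composition `([n])` (for `n = 0`, the empty set composition). -/
def one (n : ℕ) : SetComp n where
  blocks := if (Finset.univ : Finset (Fin n)).Nonempty then [Finset.univ] else []
  nonempty := by
    intro B hB
    split at hB
    · rw [List.mem_singleton] at hB; subst hB; assumption
    · simp at hB
  pairwiseDisjoint := by split <;> simp
  cover := by
    intro x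
    have h : (Finset.univ : Finset (Fin n)).Nonempty := ⟨x, Finset.mem_univ x⟩
    refine ⟨Finset.univ, ?_, Finset.mem_univ x⟩
    rw [if_pos h]
    exact List.mem_singleton.mpr rfl

end SetComp

/-- The knapsack number `n_α(F)`: the number of faces `G` with `F ⊑ G` and `type G = α`. -/
def knap {n : ℕ} (α : Composition n) (F : SetComp n) : ℕ :=
  Nat.card {G : SetComp n // F.le G ∧ G.typeList = α.blocks}

/-- The signed knapsack number `ñ_α(F) = (-1)^(n - ℓ(F)) n_α(F)`. -/
def sknap {n : ℕ} (α : Composition n) (F : SetComp n) : ℤ :=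
  (-1) ^ (n - F.len) * (knap α F : ℤ)

/-- The number of singleton (size-1) blocks of a set composition. -/
def sinF {n : ℕ} (F : SetComp n) : ℕ :=
  (F.blocks.filter fun B => B.card = 1).length

namespace SetComp

variable {n : ℕ}

theorem ext' {F G : SetComp n} (h : F.blocks = G.blocks) : F = G := by
  cases F; cases G; simpa using h

theorem nodup (F : SetComp n) : F.blocks.Nodup :=
  F.pairwiseDisjoint.imp_of_mem (fun {B C} hB _ hd => by
    rintro rfl
    exact (F.nonempty B hB).ne_empty ((Finset.disjoint_self_iff_empty _).mp hd))

theorem disjoint_of_ne (F : SetComp n) {B C : Finset (Fin n)} (hB : B ∈ F.blocks)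
    (hC : C ∈ F.blocks) (hne : B ≠ C) : Disjoint B C :=
  by haveI : Std.Symm (α := Finset (Fin n)) Disjoint := ⟨fun _ _ h => h.symm⟩; exact F.pairwiseDisjoint.forall hB hC hne

theorem sum_card (F : SetComp n) : (F.blocks.map Finset.card).sum = n := by
  classical
  rw [← List.sum_toFinset _ F.nodup]
  have hdisj : ∀ B ∈ F.blocks.toFinset, ∀ C ∈ F.blocks.toFinset, B ≠ C →
      Disjoint (id B) (id C) := fun B hB C hC hne =>
    F.disjoint_of_ne (List.mem_toFinset.mp hB) (List.mem_toFinset.mp hC) hne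
  have hbi := Finset.card_biUnion hdisj
  have huniv : F.blocks.toFinset.biUnion id = Finset.univ := by
    ext x
    simp only [Finset.mem_biUnion, Finset.mem_univ, iff_true, id]
    obtain ⟨B, hB, hxB⟩ := F.cover x
    exact ⟨B, List.mem_toFinset.mpr hB, hxB⟩
  simp only [id] at hbi
  rw [show F.blocks.toFinset.sum Finset.card = ∑ u ∈ F.blocks.toFinset, u.card from rfl, ← hbi, huniv, Finset.card_univ, Fintype.card_fin]

end SetComp

/-- The set of elements `x` such that `{x}` is a block of `F`. -/
def singFinset {n : ℕ} (F : SetComp n) : Finset (Fin n) :=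
  Finset.univ.filter fun x => ({x} : Finset (Fin n)) ∈ F.blocks

theorem sinF_eq_card {n : ℕ} (F : SetComp n) : sinF F = (singFinset F).card := by
  classical
  have hnd : (F.blocks.filter fun B => B.card = 1).Nodup := F.nodup.filter _
  rw [sinF, ← List.toFinset_card_of_nodup hnd]
  have himg : (F.blocks.filter fun B => B.card = 1).toFinset
      = (singFinset F).image (fun x => ({x} : Finset (Fin n))) := by
    ext B
    simp only [List.mem_toFinset, List.mem_filter, Finset.mem_image, singFinset,
      Finset.mem_filter, Finset.mem_univ, true_and, decide_eq_true_eq]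
    constructor
    · rintro ⟨hB, hc⟩
      obtain ⟨x, rfl⟩ := Finset.card_eq_one.mp hc
      exact ⟨x, hB, rfl⟩
    · rintro ⟨x, hx, rfl⟩
      exact ⟨hx, Finset.card_singleton x⟩
  rw [himg, Finset.card_image_of_injective _ (fun a b h => Finset.singleton_injective h)]

/-- The two-block set composition `({x}, {x}ᶜ)`. -/
def twoBlock {n : ℕ} (hn : 1 < n) (x : Fin n) : SetComp n where
  blocks := [{x}, {x}ᶜ]
  nonempty := by
    intro B hB
    simp only [List.mem_cons, List.mem_singleton, List.not_mem_nil, or_false] at hB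
    rcases hB with rfl | rfl
    · exact ⟨x, Finset.mem_singleton_self x⟩
    · rw [← Finset.card_pos, Finset.card_compl, Finset.card_singleton, Fintype.card_fin]
      omega
  pairwiseDisjoint := by
    refine List.Pairwise.cons ?_ (List.Pairwise.cons (by simp) List.Pairwise.nil)
    intro C hC
    rw [List.mem_singleton] at hC
    subst hC
    exact disjoint_compl_right
  cover := by
    intro y
    by_cases h : y = x
    · exact ⟨{x}, by simp, by simp [h]⟩
    · exact ⟨{x}ᶜ, by simp, by simp [h]⟩

theorem twoBlock_typeList {n : ℕ} (hn : 1 < n) (x : Fin n) :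
    (twoBlock hn x).typeList = [1, n - 1] := by
  simp [twoBlock, SetComp.typeList, Finset.card_compl, Fintype.card_fin]

theorem le_twoBlock {n : ℕ} (hn : 1 < n) (F : SetComp n) (x : Fin n)
    (hx : ({x} : Finset (Fin n)) ∈ F.blocks) : F.le (twoBlock hn x) := by
  intro B hB
  by_cases h : B = {x}
  · exact ⟨{x}, by simp [twoBlock], h.le⟩
  · refine ⟨{x}ᶜ, by simp [twoBlock], ?_⟩
    have hd := F.disjoint_of_ne hB hx h
    intro y hy
    simp only [Finset.mem_compl, Finset.mem_singleton]
    rintro rfl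
    exact (Finset.disjoint_left.mp hd hy) (Finset.mem_singleton_self y)

theorem knap_eq_sinF {n : ℕ} (hn : 1 < n) (α : Composition n) (hα : α.blocks = [1, n - 1])
    (F : SetComp n) : knap α F = sinF F := by
  classical
  rw [sinF_eq_card, knap]
  set f : {x : Fin n // ({x} : Finset (Fin n)) ∈ F.blocks} →
      {G : SetComp n // F.le G ∧ G.typeList = α.blocks} :=
    fun x => ⟨twoBlock hn x.1, le_twoBlock hn F x.1 x.2, by rw [twoBlock_typeList, hα]⟩
    with hf
  have hbij : Function.Bijective f := by
    constructor
    · rintro ⟨x, hx⟩ ⟨y, hy⟩ h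
      have h2 : (twoBlock hn x).blocks = (twoBlock hn y).blocks := by
        have := congrArg (fun G => (Subtype.val G).blocks) h
        simpa [hf] using this
      simp only [twoBlock, List.cons.injEq] at h2
      exact Subtype.ext (Finset.singleton_injective h2.1)
    · rintro ⟨G, hleG, htyG⟩
      rw [hα] at htyG
      have htyG' : G.blocks.map Finset.card = [1, n - 1] := htyG
      rcases hbl : G.blocks with _ | ⟨B, _ | ⟨C, _ | ⟨D, t⟩⟩⟩ <;>
        rw [hbl] at htyG' <;> simp at htyG'
      obtain ⟨hB1, hC1⟩ := htyG'
      obtain ⟨x, rfl⟩ := Finset.card_eq_one.mp hB1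
      -- C = {x}ᶜ
      have hCc : C = ({x} : Finset (Fin n))ᶜ := by
        refine (Finset.eq_of_subset_of_card_le ?_ ?_).symm
        · intro y hy
          simp only [Finset.mem_compl, Finset.mem_singleton] at hy
          obtain ⟨E, hE, hyE⟩ := G.cover y
          rw [hbl] at hE
          simp only [List.mem_cons, List.not_mem_nil, or_false] at hE
          rcases hE with rfl | rfl
          · exact absurd (Finset.mem_singleton.mp hyE) hy
          · exact hyE
        · rw [hC1, Finset.card_compl, Finset.card_singleton, Fintype.card_fin]
      -- {x} is a block of F
      have hxF : ({x} : Finset (Fin n)) ∈ F.blocks := by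
        obtain ⟨D, hD, hxD⟩ := F.cover x
        obtain ⟨E, hE, hDE⟩ := hleG D hD
        rw [hbl] at hE
        simp only [List.mem_cons, List.not_mem_nil, or_false] at hE
        rcases hE with rfl | rfl
        · rcases Finset.subset_singleton_iff.mp hDE with rfl | rfl
          · exact absurd hxD (by simp)
          · exact hD
        · rw [hCc] at hDE
          exact absurd (hDE hxD) (by simp)
      refine ⟨⟨x, hxF⟩, Subtype.ext (SetComp.ext' ?_)⟩
      show (twoBlock hn x).blocks = G.blocks
      rw [hbl, hCc]
      rfl
  rw [← Nat.card_eq_of_bijective f hbij, Nat.card_eq_fintype_card, Fintype.card_subtype]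
  rfl

theorem list_card_facts {n : ℕ} (l : List (Finset (Fin n))) (h1 : ∀ B ∈ l, B.Nonempty) :
    l.length ≤ (l.map Finset.card).sum ∧
    2 * l.length ≤ (l.map Finset.card).sum + (l.filter fun B => B.card = 1).length ∧
    ((l.filter fun B => B.card = 1).length = l.length → (l.map Finset.card).sum = l.length) := by
  induction l with
  | nil => simp
  | cons B t ih =>
    obtain ⟨ih1, ih2, ih3⟩ := ih (fun C hC => h1 C (List.mem_cons_of_mem _ hC))
    have hBpos : 1 ≤ B.card := Finset.card_pos.mpr (h1 B List.mem_cons_self)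
    have hflen : (t.filter fun C => C.card = 1).length ≤ t.length := List.length_filter_le _ _
    by_cases hB : B.card = 1
    · simp only [List.map_cons, List.sum_cons, List.filter_cons, hB, decide_true,
        if_true, List.length_cons, decide_eq_true_eq, if_pos]
      refine ⟨by omega, by omega, fun h => ?_⟩
      have := ih3 (by omega)
      omega
    · rw [List.map_cons, List.sum_cons, List.filter_cons, if_neg (by simpa using hB),
        List.length_cons]
      exact ⟨by omega, by omega, fun h => by omega⟩

theorem sinF_le_len {n : ℕ} (F : SetComp n) : sinF F ≤ F.len :=
  List.length_filter_le _ _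

theorem sinF_eq_typeList {n : ℕ} (F : SetComp n) :
    sinF F = (F.typeList.filter fun m => m = 1).length := by
  rw [sinF, SetComp.typeList, List.filter_map, List.length_map]
  rfl

/-- The canonical set composition of `[n]` whose blocks are the consecutive intervals
determined by a composition `c`. -/
def compSetComp {n : ℕ} (c : Composition n) : SetComp n where
  blocks := (List.finRange c.length).map fun i => Finset.univ.filter fun j => c.index j = i
  nonempty := by
    intro B hB
    simp only [List.mem_map, List.mem_finRange, true_and] at hB
    obtain ⟨i, rfl⟩ := hB
    refine ⟨c.embedding i ⟨0, c.one_le_blocksFun i⟩, ?_⟩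
    simp [Composition.index_embedding]
  pairwiseDisjoint := by
    rw [List.pairwise_map]
    refine (List.nodup_finRange _).imp ?_
    intro a b hab
    rw [Finset.disjoint_left]
    intro j hj1 hj2
    simp only [Finset.mem_filter, Finset.mem_univ, true_and] at hj1 hj2
    exact hab (hj1 ▸ hj2.symm ▸ rfl)
  cover := by
    intro x
    refine ⟨Finset.univ.filter fun j => c.index j = c.index x, ?_, by simp⟩
    exact List.mem_map_of_mem (List.mem_finRange _)

theorem compSetComp_len {n : ℕ} (c : Composition n) :
    (compSetComp c).len = c.length := by
  simp [compSetComp, SetComp.len]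

theorem compSetComp_typeList {n : ℕ} (c : Composition n) :
    (compSetComp c).typeList = c.blocks := by
  have hcard : ∀ i : Fin c.length,
      (Finset.univ.filter fun j => c.index j = i).card = c.blocksFun i := by
    intro i
    have himg : (Finset.univ.filter fun j => c.index j = i)
        = Finset.univ.image (c.embedding i) := by
      ext j
      simp only [Finset.mem_filter, Finset.mem_univ, true_and, Finset.mem_image]
      constructor
      · intro h
        obtain ⟨y, hy⟩ := Set.mem_range.mp (c.mem_range_embedding_iff'.mpr h.symm)
        exact ⟨y, hy⟩
      · rintro ⟨y, -, rfl⟩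
        exact c.index_embedding i y
    rw [himg, Finset.card_image_of_injective _ (c.embedding i).injective,
      Finset.card_univ, Fintype.card_fin]
  show (((List.finRange c.length).map _).map Finset.card) = c.blocks
  rw [List.map_map]
  have heq : (Finset.card ∘ fun i => Finset.univ.filter fun j => c.index j = i)
      = c.blocksFun := funext hcard
  rw [heq, ← List.ofFn_eq_map, Composition.ofFn_blocksFun]

theorem sknap_compSetComp {n : ℕ} (hn : 1 < n) (α : Composition n)
    (hα : α.blocks = [1, n - 1]) (c : Composition n) :
    sknap α (compSetComp c) =
      (-1) ^ (n - c.length) * ((c.blocks.filter fun m => m = 1).length : ℤ) := by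
  rw [sknap, knap_eq_sinF hn α hα, sinF_eq_typeList, compSetComp_typeList, compSetComp_len]

/-- The composition of `n` consisting of `s` ones followed by the blocks of `L`. -/
def stdComp (n s : ℕ) (L : List ℕ) (hL : ∀ m ∈ L, 2 ≤ m) (hsum : s + L.sum = n) :
    Composition n where
  blocks := List.replicate s 1 ++ L
  blocks_pos := by
    intro i hi
    rcases List.mem_append.mp hi with h | h
    · rw [List.eq_of_mem_replicate h]; exact one_pos
    · exact lt_of_lt_of_le two_pos (hL i h)
  blocks_sum := by
    rw [List.sum_append, List.sum_replicate, smul_eq_mul, mul_one]; exact hsum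

theorem sknap_stdComp {n : ℕ} (hn : 1 < n) (α : Composition n) (hα : α.blocks = [1, n - 1])
    (s : ℕ) (L : List ℕ) (hL : ∀ m ∈ L, 2 ≤ m) (hsum : s + L.sum = n) :
    sknap α (compSetComp (stdComp n s L hL hsum)) =
      (-1) ^ (n - (s + L.length)) * (s : ℤ) := by
  rw [sknap_compSetComp hn α hα]
  have hlen : (stdComp n s L hL hsum).length = s + L.length := by
    simp [stdComp, Composition.length]
  have hfil : ((stdComp n s L hL hsum).blocks.filter fun m => m = 1)
      = List.replicate s 1 := by
    show ((List.replicate s 1 ++ L).filter _) = _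
    rw [List.filter_append, List.filter_replicate, if_pos (by simp),
      List.filter_eq_nil_iff.mpr, List.append_nil]
    intro m hm
    have := hL m hm
    simp only [decide_eq_true_eq]
    omega
  rw [hlen, hfil, List.length_replicate]
/-- Let `n > 1`.  The set of signed knapsack numbers for the
composition `(1, n-1)` is `{-n+2} ∪ [-n+4, n-3] ∪ {0} ∪ {n} ⊆ ℤ`. -/
theorem signed_knapsack_set_one_nsub1 (n : ℕ) (hn : 1 < n) (α : Composition n)
    (hα : α.blocks = [1, n - 1]) :
    {z : ℤ | ∃ F : SetComp n, sknap α F = z} =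
      ({-(n : ℤ) + 2, 0, (n : ℤ)} : Set ℤ) ∪ Set.Icc (-(n : ℤ) + 4) ((n : ℤ) - 3) := by
  ext z
  simp only [Set.mem_setOf_eq, Set.mem_union, Set.mem_insert_iff, Set.mem_singleton_iff,
    Set.mem_Icc]
  constructor
  · rintro ⟨F, rfl⟩
    obtain ⟨h1, h2, h3⟩ := list_card_facts F.blocks F.nonempty
    rw [F.sum_card] at h1 h2 h3
    have hs : sinF F ≤ F.len := sinF_le_len F
    change F.len ≤ n at h1
    change 2 * F.len ≤ n + sinF F at h2
    change sinF F = F.len → n = F.len at h3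
    rw [sknap, knap_eq_sinF hn α hα]
    set k := F.len with hk
    set s := sinF F with hsdef
    by_cases hsk : s = k
    · have hnk : n = k := h3 hsk
      have hz : n - k = 0 := by omega
      rw [hz, pow_zero, one_mul]
      omega
    · have hsk1 : s + 1 ≤ k := by omega
      rcases Nat.even_or_odd (n - k) with he | ho
      · obtain ⟨m, hm⟩ := he
        rw [Even.neg_one_pow ⟨m, hm⟩, one_mul]
        omega
      · obtain ⟨m, hm⟩ := ho
        rw [Odd.neg_one_pow ⟨m, hm⟩, neg_one_mul]
        omega
  · intro hz
    rcases hz with (hz | hz | hz) | ⟨hlo, hhi⟩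
    · -- z = -n + 2 : take n-2 singletons and one block of size 2
      refine ⟨compSetComp (stdComp n (n - 2) [2] (by simp) (by simp; omega)), ?_⟩
      rw [sknap_stdComp hn α hα]
      have he : n - (n - 2 + [2].length) = 1 := by simp; omega
      rw [he, pow_one]
      omega
    · -- z = 0 : take the single block [n]
      refine ⟨compSetComp (stdComp n 0 [n] (by simp; omega) (by simp)), ?_⟩
      rw [sknap_stdComp hn α hα]
      omega
    · -- z = n : all singletons
      refine ⟨compSetComp (stdComp n n [] (by simp) (by simp)), ?_⟩
      rw [sknap_stdComp hn α hα]
      simp only [List.length_nil, Nat.add_zero, Nat.sub_self, pow_zero, one_mul]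
      omega
    · -- z ∈ [-n+4, n-3]
      by_cases hz0 : z = 0
      · refine ⟨compSetComp (stdComp n 0 [n] (by simp; omega) (by simp)), ?_⟩
        rw [sknap_stdComp hn α hα]
        omega
      · set s := z.natAbs with hsdef
        have hzs : z = (s : ℤ) ∨ z = -(s : ℤ) := Int.natAbs_eq z
        have hs1 : 1 ≤ s := by omega
        have hsn3 : s ≤ n - 3 := by omega
        rcases Nat.even_or_odd (n - s - 1) with he | ho
        · obtain ⟨m, hm⟩ := he
          rcases hzs with hzp | hzn
          · -- z = s, even exponent: s singletons + one block of size n - s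
            refine ⟨compSetComp (stdComp n s [n - s] (by simp; omega) (by simp; omega)), ?_⟩
            rw [sknap_stdComp hn α hα]
            have hexp : n - (s + [n - s].length) = m + m := by simp; omega
            rw [hexp, Even.neg_one_pow ⟨m, rfl⟩, one_mul]
            omega
          · -- z = -s, even n-s-1: s singletons + blocks of sizes 2, n-s-2
            have hs4 : s ≤ n - 4 := by omega
            refine ⟨compSetComp (stdComp n s [2, n - s - 2]
              (by intro m' hm'; simp at hm'; omega) (by simp; omega)), ?_⟩
            rw [sknap_stdComp hn α hα]
            have hexp : n - (s + [2, n - s - 2].length) = 2 * (m - 1) + 1 := by simp; omega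
            rw [hexp, Odd.neg_one_pow ⟨m - 1, rfl⟩, neg_one_mul]
            omega
        · obtain ⟨m, hm⟩ := ho
          rcases hzs with hzp | hzn
          · -- z = s, odd n-s-1: use two big blocks; s ≤ n-4 by parity
            have hs4 : s ≤ n - 4 := by omega
            refine ⟨compSetComp (stdComp n s [2, n - s - 2]
              (by intro m' hm'; simp at hm'; omega) (by simp; omega)), ?_⟩
            rw [sknap_stdComp hn α hα]
            have hexp : n - (s + [2, n - s - 2].length) = m + m := by simp; omega
            rw [hexp, Even.neg_one_pow ⟨m, rfl⟩, one_mul]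
            omega
          · -- z = -s, odd exponent: one big block
            refine ⟨compSetComp (stdComp n s [n - s] (by simp; omega) (by simp; omega)), ?_⟩
            rw [sknap_stdComp hn α hα]
            have hexp : n - (s + [n - s].length) = 2 * m + 1 := by simp; omega
            rw [hexp, Odd.neg_one_pow ⟨m, rfl⟩, neg_one_mul]
            omega

end CardShuffle
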